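/- For every continuous function f : [0,1]×[0,A] → ℝ (A > 0) extended to a bounded continuous function on [0,1]×[0,∞), sup_{(x,y)∈[0,1]×[0,A]} |L_{m,n}(f;x,y) − f(x,y)| → 0 as m,n → ∞. -/

import Mathlib

lemma tsum_pow_div_factorial (t : ℝ) : ∑' k : ℕ, t ^ k / (Nat.factorial k : ℝ) = Real.exp t := by
  rw [Real.exp_eq_exp_ℝ, NormedSpace.exp_eq_tsum_div]

lemma summable_p1 (t : ℝ) : Summable (fun k : ℕ => (k : ℝ) * t ^ k / (Nat.factorial k : ℝ)) := by
  rw [← summable_nat_add_iff 1]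
  have : (fun k : ℕ => ((k + 1 : ℕ) : ℝ) * t ^ (k + 1) / (Nat.factorial (k + 1) : ℝ))
      = fun k : ℕ => t * (t ^ k / (Nat.factorial k : ℝ)) := by
    funext k
    rw [Nat.factorial_succ]
    push_cast
    field_simp
    ring
  rw [this]
  exact (Real.summable_pow_div_factorial t).mul_left t

lemma tsum_p1 (t : ℝ) : ∑' k : ℕ, (k : ℝ) * t ^ k / (Nat.factorial k : ℝ) = t * Real.exp t := by
  rw [Summable.tsum_eq_zero_add (summable_p1 t)]
  have : (fun k : ℕ => ((k + 1 : ℕ) : ℝ) * t ^ (k + 1) / (Nat.factorial (k + 1) : ℝ))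
      = fun k : ℕ => t * (t ^ k / (Nat.factorial k : ℝ)) := by
    funext k
    rw [Nat.factorial_succ]
    push_cast
    field_simp
    ring
  have h2 : (fun k : ℕ => ((k : ℝ) + 1) * t ^ (k + 1) / (Nat.factorial (k + 1) : ℝ))
      = fun k : ℕ => t * (t ^ k / (Nat.factorial k : ℝ)) := by
    funext k
    rw [Nat.factorial_succ]
    push_cast
    field_simp
    ring
  push_cast
  rw [h2, tsum_mul_left, tsum_pow_div_factorial]
  simp

lemma shift_p2 (t : ℝ) : (fun k : ℕ => (((k:ℝ) + 1)) ^ 2 * t ^ (k + 1) / (Nat.factorial (k + 1) : ℝ))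
    = fun k : ℕ => t * ((k : ℝ) * t ^ k / (Nat.factorial k : ℝ)) + t * (t ^ k / (Nat.factorial k : ℝ)) := by
  funext k
  rw [Nat.factorial_succ]
  have h1 : ((k : ℝ) + 1) ≠ 0 := by positivity
  have h2 : (Nat.factorial k : ℝ) ≠ 0 := Nat.cast_ne_zero.mpr k.factorial_ne_zero
  push_cast
  field_simp
  ring

lemma summable_p2 (t : ℝ) : Summable (fun k : ℕ => (k : ℝ) ^ 2 * t ^ k / (Nat.factorial k : ℝ)) := by
  rw [← summable_nat_add_iff 1]
  have : (fun k : ℕ => ((k + 1 : ℕ) : ℝ) ^ 2 * t ^ (k + 1) / (Nat.factorial (k + 1) : ℝ))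
      = fun k : ℕ => t * ((k : ℝ) * t ^ k / (Nat.factorial k : ℝ)) + t * (t ^ k / (Nat.factorial k : ℝ)) := by
    push_cast
    exact shift_p2 t
  rw [this]
  exact ((summable_p1 t).mul_left t).add ((Real.summable_pow_div_factorial t).mul_left t)

lemma tsum_p2 (t : ℝ) : ∑' k : ℕ, (k : ℝ) ^ 2 * t ^ k / (Nat.factorial k : ℝ)
    = (t ^ 2 + t) * Real.exp t := by
  rw [Summable.tsum_eq_zero_add (summable_p2 t)]
  push_cast
  rw [shift_p2 t, Summable.tsum_add (((summable_p1 t).mul_left t)) ((Real.summable_pow_div_factorial t).mul_left t),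
    tsum_mul_left, tsum_mul_left, tsum_p1, tsum_pow_div_factorial]
  simp
  ring

/-- Poisson-type weight. -/
noncomputable def pw (t : ℝ) (k : ℕ) : ℝ := Real.exp (-t) * t ^ k / (Nat.factorial k : ℝ)

lemma pw_eq (t : ℝ) : pw t = fun k => Real.exp (-t) * (t ^ k / (Nat.factorial k : ℝ)) := by
  funext k; rw [pw, mul_div_assoc]

lemma summable_pw (t : ℝ) : Summable (pw t) := by
  rw [pw_eq]; exact (Real.summable_pow_div_factorial t).mul_left _

lemma tsum_pw (t : ℝ) : ∑' k, pw t k = 1 := by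
  rw [pw_eq, tsum_mul_left, tsum_pow_div_factorial, ← Real.exp_add]
  simp

lemma pw_nonneg {t : ℝ} (ht : 0 ≤ t) (k : ℕ) : 0 ≤ pw t k := by
  rw [pw]; positivity

lemma summable_pw_mul (t : ℝ) : Summable (fun k => pw t k * (k : ℝ)) := by
  have : (fun k => pw t k * (k : ℝ)) = fun k : ℕ => Real.exp (-t) * ((k:ℝ) * t ^ k / (Nat.factorial k : ℝ)) := by
    funext k; rw [pw]; ring
  rw [this]; exact (summable_p1 t).mul_left _

lemma tsum_pw_mul (t : ℝ) : ∑' k, pw t k * (k : ℝ) = t := by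
  have : (fun k => pw t k * (k : ℝ)) = fun k : ℕ => Real.exp (-t) * ((k:ℝ) * t ^ k / (Nat.factorial k : ℝ)) := by
    funext k; rw [pw]; ring
  rw [this, tsum_mul_left, tsum_p1, ← mul_assoc, mul_comm (Real.exp (-t)), mul_assoc, ← Real.exp_add]
  simp

lemma summable_pw_sq (t : ℝ) : Summable (fun k => pw t k * (k : ℝ) ^ 2) := by
  have : (fun k => pw t k * (k : ℝ) ^ 2) = fun k : ℕ => Real.exp (-t) * ((k:ℝ)^2 * t ^ k / (Nat.factorial k : ℝ)) := by
    funext k; rw [pw]; ring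
  rw [this]; exact (summable_p2 t).mul_left _

lemma tsum_pw_sq (t : ℝ) : ∑' k, pw t k * (k : ℝ) ^ 2 = t ^ 2 + t := by
  have : (fun k => pw t k * (k : ℝ) ^ 2) = fun k : ℕ => Real.exp (-t) * ((k:ℝ)^2 * t ^ k / (Nat.factorial k : ℝ)) := by
    funext k; rw [pw]; ring
  rw [this, tsum_mul_left, tsum_p2]
  rw [mul_comm, mul_assoc, ← Real.exp_add]
  simp

lemma central_eq (t : ℝ) : (fun k => pw t k * ((k : ℝ) - t) ^ 2)
    = fun k => (pw t k * (k : ℝ) ^ 2 + (-(2*t)) * (pw t k * (k : ℝ))) + t^2 * pw t k := by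
  funext k; ring

lemma summable_central (t : ℝ) : Summable (fun k => pw t k * ((k : ℝ) - t) ^ 2) := by
  rw [central_eq]
  exact ((summable_pw_sq t).add ((summable_pw_mul t).mul_left _)).add ((summable_pw t).mul_left _)

lemma tsum_central (t : ℝ) : ∑' k, pw t k * ((k : ℝ) - t) ^ 2 = t := by
  rw [central_eq, Summable.tsum_add ((summable_pw_sq t).add ((summable_pw_mul t).mul_left _))
    ((summable_pw t).mul_left _),
    Summable.tsum_add (summable_pw_sq t) ((summable_pw_mul t).mul_left _),
    tsum_mul_left, tsum_mul_left, tsum_pw_sq, tsum_pw_mul, tsum_pw]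
  ring

/-- Binomial weight. -/
noncomputable def bw (m : ℕ) (x : ℝ) (ν : ℕ) : ℝ := (m.choose ν : ℝ) * x ^ ν * (1 - x) ^ (m - ν)

lemma bw_eval (m : ℕ) (x : ℝ) (ν : ℕ) : (bernsteinPolynomial ℝ m ν).eval x = bw m x ν := by
  simp [bernsteinPolynomial, bw]

lemma bw_nonneg {x : ℝ} (hx0 : 0 ≤ x) (hx1 : x ≤ 1) (m ν : ℕ) : 0 ≤ bw m x ν := by
  have : 0 ≤ 1 - x := by linarith
  rw [bw]; positivity

lemma bw_sum (m : ℕ) (x : ℝ) : ∑ ν ∈ Finset.range (m + 1), bw m x ν = 1 := by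
  have h := congrArg (Polynomial.eval x) (bernsteinPolynomial.sum ℝ m)
  simpa [Polynomial.eval_finset_sum, bw_eval] using h

lemma bw_sum_mul (m : ℕ) (x : ℝ) :
    ∑ ν ∈ Finset.range (m + 1), (ν : ℝ) * bw m x ν = m * x := by
  have h := congrArg (Polynomial.eval x) (bernsteinPolynomial.sum_smul ℝ m)
  simpa [Polynomial.eval_finset_sum, bw_eval, mul_comm] using h

lemma bw_sum_mul_sub (m : ℕ) (x : ℝ) :
    ∑ ν ∈ Finset.range (m + 1), (ν : ℝ) * ((ν : ℝ) - 1) * bw m x ν = (m : ℝ) * ((m : ℝ) - 1) * x ^ 2 := by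
  have h := congrArg (Polynomial.eval x) (bernsteinPolynomial.sum_mul_smul ℝ m)
  rw [Polynomial.eval_finset_sum] at h
  have hcast : ∀ j : ℕ, ((j * (j - 1) : ℕ) : ℝ) = (j : ℝ) * ((j : ℝ) - 1) := by
    intro j
    cases j with
    | zero => simp
    | succ i => push_cast [Nat.succ_sub_one]; ring
  calc ∑ ν ∈ Finset.range (m + 1), (ν : ℝ) * ((ν : ℝ) - 1) * bw m x ν
      = ∑ ν ∈ Finset.range (m + 1), ((ν * (ν - 1) : ℕ) : ℝ) * bw m x ν := by
        refine Finset.sum_congr rfl fun ν _ => ?_; rw [hcast]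
    _ = (m : ℝ) * ((m : ℝ) - 1) * x ^ 2 := by
        rw [← hcast m]
        simpa [bw_eval, mul_comm, mul_assoc] using h

lemma bw_variance (m : ℕ) (x : ℝ) :
    ∑ ν ∈ Finset.range (m + 1), ((ν : ℝ) - m * x) ^ 2 * bw m x ν = m * x * (1 - x) := by
  have e : ∀ ν : ℕ, ((ν : ℝ) - m * x) ^ 2 * bw m x ν
      = (ν : ℝ) * ((ν : ℝ) - 1) * bw m x ν + (1 - 2 * (m : ℝ) * x) * ((ν : ℝ) * bw m x ν)
        + ((m : ℝ) * x) ^ 2 * bw m x ν := by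
    intro ν; ring
  rw [Finset.sum_congr rfl fun ν _ => e ν]
  rw [Finset.sum_add_distrib, Finset.sum_add_distrib, ← Finset.mul_sum, ← Finset.mul_sum,
    bw_sum_mul_sub, bw_sum_mul, bw_sum]
  ring

lemma sq_add_le (u a : ℝ) : (u + a) ^ 2 ≤ 2 * u ^ 2 + 2 * a ^ 2 := by nlinarith [sq_nonneg (u - a)]

lemma T_bound (α₁ β₁ : ℝ) (hα₁ : 0 ≤ α₁) (hβ₁ : α₁ ≤ β₁) (m : ℕ) (hm : 1 ≤ m)
    {x : ℝ} (hx0 : 0 ≤ x) (hx1 : x ≤ 1) :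
    ∑ ν ∈ Finset.range (m + 1), bw m x ν * (((ν : ℝ) + α₁) / ((m : ℝ) + β₁) - x) ^ 2
      ≤ (2 + 2 * β₁ ^ 2) / m := by
  have hβ₁' : 0 ≤ β₁ := le_trans hα₁ hβ₁
  have hm' : (1 : ℝ) ≤ (m : ℝ) := by exact_mod_cast hm
  have hD : (0 : ℝ) < (m : ℝ) + β₁ := by linarith
  set D : ℝ := (m : ℝ) + β₁ with hDdef
  have key : ∀ ν : ℕ, bw m x ν * (((ν : ℝ) + α₁) / D - x) ^ 2
      ≤ (2 / D ^ 2) * (((ν : ℝ) - m * x) ^ 2 * bw m x ν) + (2 * β₁ ^ 2 / D ^ 2) * bw m x ν := by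
    intro ν
    have hbw := bw_nonneg hx0 hx1 m ν
    have he : ((ν : ℝ) + α₁) / D - x = (((ν : ℝ) - m * x) + (α₁ - β₁ * x)) / D := by
      field_simp
      rw [hDdef]; ring
    have hne : (0:ℝ) ≤ 1 - x := by linarith
    have ha : (α₁ - β₁ * x) ^ 2 ≤ β₁ ^ 2 := by
      nlinarith [mul_nonneg hβ₁' hx0, mul_nonneg hβ₁' hne]
    have hq : (((ν : ℝ) + α₁) / D - x) ^ 2
        ≤ (2 * ((ν : ℝ) - m * x) ^ 2 + 2 * β₁ ^ 2) / D ^ 2 := by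
      rw [he, div_pow]
      apply div_le_div_of_nonneg_right ?_ (by positivity) |>.trans_eq rfl
      calc (((ν : ℝ) - m * x) + (α₁ - β₁ * x)) ^ 2
          ≤ 2 * ((ν : ℝ) - m * x) ^ 2 + 2 * (α₁ - β₁ * x) ^ 2 := sq_add_le _ _
        _ ≤ 2 * ((ν : ℝ) - m * x) ^ 2 + 2 * β₁ ^ 2 := by linarith
    calc bw m x ν * (((ν : ℝ) + α₁) / D - x) ^ 2
        ≤ bw m x ν * ((2 * ((ν : ℝ) - m * x) ^ 2 + 2 * β₁ ^ 2) / D ^ 2) :=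
          mul_le_mul_of_nonneg_left hq hbw
      _ = (2 / D ^ 2) * (((ν : ℝ) - m * x) ^ 2 * bw m x ν) + (2 * β₁ ^ 2 / D ^ 2) * bw m x ν := by
          ring
  calc ∑ ν ∈ Finset.range (m + 1), bw m x ν * (((ν : ℝ) + α₁) / D - x) ^ 2
      ≤ ∑ ν ∈ Finset.range (m + 1),
          ((2 / D ^ 2) * (((ν : ℝ) - m * x) ^ 2 * bw m x ν) + (2 * β₁ ^ 2 / D ^ 2) * bw m x ν) :=
        Finset.sum_le_sum fun ν _ => key ν
    _ = (2 / D ^ 2) * ((m : ℝ) * x * (1 - x)) + (2 * β₁ ^ 2 / D ^ 2) * 1 := by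
        rw [Finset.sum_add_distrib, ← Finset.mul_sum, ← Finset.mul_sum, bw_variance, bw_sum]
    _ ≤ (2 + 2 * β₁ ^ 2) / m := by
        have hmD : (m : ℝ) ^ 2 ≤ D ^ 2 := by nlinarith
        have h1 : (2 / D ^ 2) * ((m : ℝ) * x * (1 - x)) ≤ 2 / m := by
          have hx : (m : ℝ) * x * (1 - x) ≤ (m : ℝ) := by
            have hq : x * (1 - x) ≤ 1 := by nlinarith [sq_nonneg (x - 1/2)]
            calc (m:ℝ) * x * (1-x) = (m:ℝ) * (x * (1-x)) := by ring
              _ ≤ (m:ℝ) * 1 := mul_le_mul_of_nonneg_left hq (by positivity)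
              _ = (m:ℝ) := mul_one _
          have : (2 / D ^ 2) * ((m : ℝ) * x * (1 - x)) ≤ (2 / D ^ 2) * (m : ℝ) :=
            mul_le_mul_of_nonneg_left hx (by positivity)
          calc (2 / D ^ 2) * ((m : ℝ) * x * (1 - x)) ≤ (2 / D ^ 2) * (m : ℝ) := this
            _ ≤ (2 / (m : ℝ) ^ 2) * (m : ℝ) := by
                apply mul_le_mul_of_nonneg_right _ (by positivity)
                apply div_le_div_of_nonneg_left (by norm_num) (by positivity) hmD
            _ = 2 / m := by field_simp
        have h2 : (2 * β₁ ^ 2 / D ^ 2) * 1 ≤ 2 * β₁ ^ 2 / m := by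
          rw [mul_one]
          apply div_le_div_of_nonneg_left (by positivity) (by positivity) ?_
          nlinarith
        calc (2 / D ^ 2) * ((m : ℝ) * x * (1 - x)) + (2 * β₁ ^ 2 / D ^ 2) * 1
            ≤ 2 / m + 2 * β₁ ^ 2 / m := add_le_add h1 h2
          _ = (2 + 2 * β₁ ^ 2) / m := by ring

lemma summable_pw_quad (t a b : ℝ) : Summable (fun k : ℕ => pw t k * ((k : ℝ) * a + b) ^ 2) := by
  have : (fun k : ℕ => pw t k * ((k : ℝ) * a + b) ^ 2)
      = fun k : ℕ => a ^ 2 * (pw t k * (k : ℝ) ^ 2) + ((2 * a * b) * (pw t k * (k : ℝ))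
        + b ^ 2 * pw t k) := by
    funext k; ring
  rw [this]
  exact ((summable_pw_sq t).mul_left _).add
    (((summable_pw_mul t).mul_left _).add ((summable_pw t).mul_left _))

lemma summable_S (α₂ β₂ : ℝ) (n : ℕ) (hn : 1 ≤ n) (hβ : 0 ≤ β₂) (y : ℝ) :
    Summable (fun k : ℕ => pw ((n : ℝ) * y) k * (((k : ℝ) + α₂) / ((n : ℝ) + β₂) - y) ^ 2) := by
  have hn' : (1 : ℝ) ≤ (n : ℝ) := by exact_mod_cast hn
  have hD : ((n : ℝ) + β₂) ≠ 0 := by positivity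
  have : (fun k : ℕ => pw ((n : ℝ) * y) k * (((k : ℝ) + α₂) / ((n : ℝ) + β₂) - y) ^ 2)
      = fun k : ℕ => pw ((n : ℝ) * y) k * ((k : ℝ) * (1 / ((n : ℝ) + β₂))
        + (α₂ / ((n : ℝ) + β₂) - y)) ^ 2 := by
    funext k
    congr 1
    congr 1
    field_simp
    ring
  rw [this]
  exact summable_pw_quad _ _ _

lemma S_bound (α₂ β₂ A : ℝ) (hα₂ : 0 ≤ α₂) (hβ₂ : α₂ ≤ β₂) (hA : 0 < A) (n : ℕ) (hn : 1 ≤ n)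
    {y : ℝ} (hy0 : 0 ≤ y) (hy1 : y ≤ A) :
    ∑' k : ℕ, pw ((n : ℝ) * y) k * (((k : ℝ) + α₂) / ((n : ℝ) + β₂) - y) ^ 2
      ≤ (2 * A + 2 * β₂ ^ 2 * (1 + A) ^ 2) / n := by
  have hβ₂' : 0 ≤ β₂ := le_trans hα₂ hβ₂
  have hn' : (1 : ℝ) ≤ (n : ℝ) := by exact_mod_cast hn
  have hD : (0 : ℝ) < (n : ℝ) + β₂ := by linarith
  set D : ℝ := (n : ℝ) + β₂ with hDdef
  set t : ℝ := (n : ℝ) * y with htdef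
  have ht0 : 0 ≤ t := by positivity
  have key : ∀ k : ℕ, pw t k * (((k : ℝ) + α₂) / D - y) ^ 2
      ≤ (2 / D ^ 2) * (pw t k * ((k : ℝ) - t) ^ 2) + (2 * β₂ ^ 2 * (1 + A) ^ 2 / D ^ 2) * pw t k := by
    intro k
    have hpw := pw_nonneg ht0 k
    have he : ((k : ℝ) + α₂) / D - y = (((k : ℝ) - t) + (α₂ - β₂ * y)) / D := by
      field_simp
      rw [hDdef, htdef]; ring
    have ha : (α₂ - β₂ * y) ^ 2 ≤ β₂ ^ 2 * (1 + A) ^ 2 := by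
      have h1 : α₂ - β₂ * y ≤ β₂ * (1 + A) := by nlinarith [mul_nonneg hβ₂' hy0]
      have h2 : -(β₂ * (1 + A)) ≤ α₂ - β₂ * y := by nlinarith [mul_nonneg hβ₂' (by linarith : (0:ℝ) ≤ A - y)]
      nlinarith
    have hq : (((k : ℝ) + α₂) / D - y) ^ 2
        ≤ (2 * ((k : ℝ) - t) ^ 2 + 2 * (β₂ ^ 2 * (1 + A) ^ 2)) / D ^ 2 := by
      rw [he, div_pow]
      apply div_le_div_of_nonneg_right ?_ (by positivity) |>.trans_eq rfl
      calc (((k : ℝ) - t) + (α₂ - β₂ * y)) ^ 2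
          ≤ 2 * ((k : ℝ) - t) ^ 2 + 2 * (α₂ - β₂ * y) ^ 2 := sq_add_le _ _
        _ ≤ 2 * ((k : ℝ) - t) ^ 2 + 2 * (β₂ ^ 2 * (1 + A) ^ 2) := by linarith
    calc pw t k * (((k : ℝ) + α₂) / D - y) ^ 2
        ≤ pw t k * ((2 * ((k : ℝ) - t) ^ 2 + 2 * (β₂ ^ 2 * (1 + A) ^ 2)) / D ^ 2) :=
          mul_le_mul_of_nonneg_left hq hpw
      _ = (2 / D ^ 2) * (pw t k * ((k : ℝ) - t) ^ 2) + (2 * β₂ ^ 2 * (1 + A) ^ 2 / D ^ 2) * pw t k := by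
          ring
  have hsum2 : Summable (fun k : ℕ => (2 / D ^ 2) * (pw t k * ((k : ℝ) - t) ^ 2)
      + (2 * β₂ ^ 2 * (1 + A) ^ 2 / D ^ 2) * pw t k) :=
    ((summable_central t).mul_left _).add ((summable_pw t).mul_left _)
  calc ∑' k : ℕ, pw t k * (((k : ℝ) + α₂) / D - y) ^ 2
      ≤ ∑' k : ℕ, ((2 / D ^ 2) * (pw t k * ((k : ℝ) - t) ^ 2)
          + (2 * β₂ ^ 2 * (1 + A) ^ 2 / D ^ 2) * pw t k) :=
        Summable.tsum_le_tsum key (summable_S α₂ β₂ n hn hβ₂' y) hsum2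
    _ = (2 / D ^ 2) * t + (2 * β₂ ^ 2 * (1 + A) ^ 2 / D ^ 2) * 1 := by
        rw [Summable.tsum_add ((summable_central t).mul_left _) ((summable_pw t).mul_left _),
          tsum_mul_left, tsum_mul_left, tsum_central, tsum_pw]
    _ ≤ (2 * A + 2 * β₂ ^ 2 * (1 + A) ^ 2) / n := by
        have hnD : (n : ℝ) ^ 2 ≤ D ^ 2 := by nlinarith
        have h1 : (2 / D ^ 2) * t ≤ 2 * A / n := by
          have ht : t ≤ (n : ℝ) * A := by
            rw [htdef]; exact mul_le_mul_of_nonneg_left hy1 (by positivity)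
          calc (2 / D ^ 2) * t ≤ (2 / D ^ 2) * ((n : ℝ) * A) :=
                mul_le_mul_of_nonneg_left ht (by positivity)
            _ ≤ (2 / (n : ℝ) ^ 2) * ((n : ℝ) * A) := by
                apply mul_le_mul_of_nonneg_right _ (by positivity)
                apply div_le_div_of_nonneg_left (by norm_num) (by positivity) hnD
            _ = 2 * A / n := by field_simp
        have h2 : (2 * β₂ ^ 2 * (1 + A) ^ 2 / D ^ 2) * 1 ≤ 2 * β₂ ^ 2 * (1 + A) ^ 2 / n := by
          rw [mul_one]
          apply div_le_div_of_nonneg_left (by positivity) (by positivity) ?_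
          nlinarith
        calc (2 / D ^ 2) * t + (2 * β₂ ^ 2 * (1 + A) ^ 2 / D ^ 2) * 1
            ≤ 2 * A / n + 2 * β₂ ^ 2 * (1 + A) ^ 2 / n := add_le_add h1 h2
          _ = (2 * A + 2 * β₂ ^ 2 * (1 + A) ^ 2) / n := by ring

/-- The bivariate Stancu–Szász type operator of the paper:
`L α₁ β₁ α₂ β₂ m n f x y = ∑_{k≥0} ∑_{ν=0}^m C(m,ν) x^ν (1-x)^{m-ν} e^{-ny}(ny)^k/k! ·
  f((ν+α₁)/(m+β₁), (k+α₂)/(n+β₂))`. -/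
noncomputable def L (α₁ β₁ α₂ β₂ : ℝ) (m n : ℕ) (f : ℝ → ℝ → ℝ) (x y : ℝ) : ℝ :=
  ∑' k : ℕ, ∑ ν ∈ Finset.range (m + 1),
    ((m.choose ν : ℝ) * x ^ ν * (1 - x) ^ (m - ν)) *
      (Real.exp (-(n * y)) * (n * y) ^ k / (Nat.factorial k : ℝ)) *
      f ((ν + α₁) / (m + β₁)) ((k + α₂) / (n + β₂))

set_option maxHeartbeats 1000000 in
theorem L_uniform_convergence_compact (α₁ β₁ α₂ β₂ A : ℝ) (hα₁ : 0 ≤ α₁) (hβ₁ : α₁ ≤ β₁)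
    (hα₂ : 0 ≤ α₂) (hβ₂ : α₂ ≤ β₂) (hA : 0 < A) (f : ℝ → ℝ → ℝ)
    (hfc : ContinuousOn (fun p : ℝ × ℝ => f p.1 p.2) (Set.Icc 0 1 ×ˢ Set.Ici 0))
    (hfb : ∃ C : ℝ, ∀ x ∈ Set.Icc (0:ℝ) 1, ∀ y ∈ Set.Ici (0:ℝ), |f x y| ≤ C) :
    ∀ ε > (0:ℝ), ∃ N : ℕ, ∀ m n : ℕ, N ≤ m → N ≤ n →
      ∀ x ∈ Set.Icc (0:ℝ) 1, ∀ y ∈ Set.Icc (0:ℝ) A,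
        |L α₁ β₁ α₂ β₂ m n f x y - f x y| < ε := by
  have hβ₁' : 0 ≤ β₁ := le_trans hα₁ hβ₁
  have hβ₂' : 0 ≤ β₂ := le_trans hα₂ hβ₂
  intro ε hε
  obtain ⟨C₀, hC₀⟩ := hfb
  set C' : ℝ := max C₀ 1 with hC'def
  have hC'1 : (1:ℝ) ≤ C' := le_max_right _ _
  have hC'0 : (0:ℝ) < C' := by linarith
  have hCb : ∀ u ∈ Set.Icc (0:ℝ) 1, ∀ v ∈ Set.Ici (0:ℝ), |f u v| ≤ C' :=
    fun u hu v hv => (hC₀ u hu v hv).trans (le_max_left _ _)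
  -- uniform continuity on a compact rectangle
  have hcomp : IsCompact ((Set.Icc (0:ℝ) 1) ×ˢ (Set.Icc (0:ℝ) (A+1))) :=
    isCompact_Icc.prod isCompact_Icc
  have hsub : (Set.Icc (0:ℝ) 1) ×ˢ (Set.Icc (0:ℝ) (A+1)) ⊆ (Set.Icc 0 1) ×ˢ (Set.Ici 0) :=
    Set.prod_mono_right Set.Icc_subset_Ici_self
  have hUC := hcomp.uniformContinuousOn_of_continuous (hfc.mono hsub)
  rw [Metric.uniformContinuousOn_iff] at hUC
  obtain ⟨δ₀, hδ₀, hδuc⟩ := hUC (ε/2) (by linarith)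
  set δ : ℝ := min δ₀ 1 with hδdef
  have hδpos : 0 < δ := lt_min hδ₀ one_pos
  have hδ1 : δ ≤ 1 := min_le_right _ _
  have hδδ₀ : δ ≤ δ₀ := min_le_left _ _
  set c : ℝ := 4 * C' / δ ^ 2 with hcdef
  have hc0 : 0 < c := by positivity
  -- pointwise estimate
  have hpt : ∀ u v x y : ℝ, u ∈ Set.Icc (0:ℝ) 1 → 0 ≤ v → x ∈ Set.Icc (0:ℝ) 1 →
      y ∈ Set.Icc (0:ℝ) A → |f u v - f x y| ≤ ε/2 + c * ((u - x)^2 + (v - y)^2) := by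
    intro u v x y hu hv hx hy
    have hy0 : 0 ≤ y := hy.1
    have hyA : y ≤ A := hy.2
    by_cases hd : dist ((u, v) : ℝ × ℝ) ((x, y) : ℝ × ℝ) < δ
    · have hvy : |v - y| < δ := by
        have h2 : dist v y ≤ dist ((u,v) : ℝ×ℝ) ((x,y) : ℝ×ℝ) := by
          rw [Prod.dist_eq]; exact le_max_right _ _
        rw [Real.dist_eq] at h2; linarith
      have hvA : v ≤ A + 1 := by
        have h3 := abs_lt.mp hvy
        linarith [h3.1, h3.2]
      have hmem1 : ((u,v) : ℝ×ℝ) ∈ (Set.Icc (0:ℝ) 1) ×ˢ (Set.Icc (0:ℝ) (A+1)) :=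
        Set.mem_prod.mpr ⟨hu, ⟨hv, hvA⟩⟩
      have hmem2 : ((x,y) : ℝ×ℝ) ∈ (Set.Icc (0:ℝ) 1) ×ˢ (Set.Icc (0:ℝ) (A+1)) :=
        Set.mem_prod.mpr ⟨hx, ⟨hy0, by linarith⟩⟩
      have h4 := hδuc _ hmem1 _ hmem2 (lt_of_lt_of_le hd hδδ₀)
      rw [Real.dist_eq] at h4
      have hrest : 0 ≤ c * ((u - x)^2 + (v - y)^2) := by positivity
      calc |f u v - f x y| ≤ ε/2 := le_of_lt h4
        _ ≤ ε/2 + c * ((u - x)^2 + (v - y)^2) := by linarith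
    · push_neg at hd
      have hsq : δ^2 ≤ (u - x)^2 + (v - y)^2 := by
        rw [Prod.dist_eq, Real.dist_eq, Real.dist_eq] at hd
        rcases le_max_iff.mp hd with h | h
        · nlinarith [sq_abs (u-x), sq_nonneg (v-y), abs_nonneg (u-x)]
        · nlinarith [sq_abs (v-y), sq_nonneg (u-x), abs_nonneg (v-y)]
      have hb : |f u v - f x y| ≤ 2 * C' := by
        have h1 : |f u v| ≤ C' := hCb u hu v hv
        have h2 : |f x y| ≤ C' := hCb x hx y hy0
        calc |f u v - f x y| ≤ |f u v| + |f x y| := abs_sub _ _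
          _ ≤ 2 * C' := by linarith
      have h5 : c * δ^2 ≤ c * ((u-x)^2+(v-y)^2) := mul_le_mul_of_nonneg_left hsq hc0.le
      have hcδ : c * δ^2 = 4 * C' := by
        rw [hcdef]; field_simp
      have h6 : 2 * C' ≤ c * ((u-x)^2 + (v-y)^2) := by linarith
      linarith
  -- choose N
  set C₁ : ℝ := 2 + 2 * β₁ ^ 2 with hC₁def
  set C₂ : ℝ := 2 * A + 2 * β₂ ^ 2 * (1 + A) ^ 2 with hC₂def
  have hC₁0 : 0 < C₁ := by positivity
  have hC₂0 : 0 < C₂ := by positivity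
  set N₀ : ℕ := ⌈(2 * c * (C₁ + C₂)) / ε⌉₊ with hN₀def
  refine ⟨N₀ + 1, ?_⟩
  intro m n hm hn x hx y hy
  have hm1 : 1 ≤ m := le_trans (Nat.le_add_left 1 N₀) hm
  have hn1 : 1 ≤ n := le_trans (Nat.le_add_left 1 N₀) hn
  have hx0 : 0 ≤ x := hx.1
  have hx1 : x ≤ 1 := hx.2
  have hy0 : 0 ≤ y := hy.1
  have hyA : y ≤ A := hy.2
  have hm' : (1:ℝ) ≤ (m:ℝ) := by exact_mod_cast hm1
  have hn' : (1:ℝ) ≤ (n:ℝ) := by exact_mod_cast hn1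
  set t : ℝ := (n:ℝ) * y with htdef
  have ht0 : 0 ≤ t := by positivity
  set Dm : ℝ := (m:ℝ) + β₁ with hDmdef
  set Dn : ℝ := (n:ℝ) + β₂ with hDndef
  have hDm : (0:ℝ) < Dm := by rw [hDmdef]; linarith
  have hDn : (0:ℝ) < Dn := by rw [hDndef]; linarith
  set F : ℕ → ℕ → ℝ := fun ν k => f (((ν:ℝ) + α₁) / Dm) (((k:ℝ) + α₂) / Dn) with hFdef
  -- nodes are in the domain
  have hnode1 : ∀ ν ∈ Finset.range (m+1), ((ν:ℝ) + α₁) / Dm ∈ Set.Icc (0:ℝ) 1 := by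
    intro ν hν
    have hνm : (ν:ℝ) ≤ (m:ℝ) := by
      exact_mod_cast Nat.lt_succ_iff.mp (Finset.mem_range.mp hν)
    constructor
    · positivity
    · rw [div_le_one hDm, hDmdef]; linarith
  have hnode2 : ∀ k : ℕ, (0:ℝ) ≤ ((k:ℝ) + α₂) / Dn := by
    intro k; positivity
  have hFb : ∀ ν ∈ Finset.range (m+1), ∀ k : ℕ, |F ν k| ≤ C' := by
    intro ν hν k
    exact hCb _ (hnode1 ν hν) _ (hnode2 k)
  -- summability of the main terms
  have hsF : ∀ ν ∈ Finset.range (m+1),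
      Summable (fun k : ℕ => bw m x ν * pw t k * F ν k) := by
    intro ν hν
    apply Summable.of_norm_bounded (g := fun k => (bw m x ν * C') * pw t k)
      (((summable_pw t).mul_left _))
    intro k
    have hbw := bw_nonneg hx0 hx1 m ν
    have hpw := pw_nonneg ht0 k
    rw [Real.norm_eq_abs, abs_mul, abs_mul, abs_of_nonneg hbw, abs_of_nonneg hpw]
    calc bw m x ν * pw t k * |F ν k| ≤ bw m x ν * pw t k * C' := by
          exact mul_le_mul_of_nonneg_left (hFb ν hν k) (by positivity)
      _ = bw m x ν * C' * pw t k := by ring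
  have hsconst : ∀ ν : ℕ, Summable (fun k : ℕ => bw m x ν * pw t k * f x y) := by
    intro ν
    have : (fun k : ℕ => bw m x ν * pw t k * f x y)
        = fun k : ℕ => (bw m x ν * f x y) * pw t k := by funext k; ring
    rw [this]; exact (summable_pw t).mul_left _
  -- rewrite L
  have hL : L α₁ β₁ α₂ β₂ m n f x y
      = ∑ ν ∈ Finset.range (m+1), ∑' k : ℕ, bw m x ν * pw t k * F ν k := by
    rw [L, ← Summable.tsum_finsetSum hsF]
    refine tsum_congr fun k => Finset.sum_congr rfl fun ν _ => ?_
    simp only [bw, pw, hFdef, htdef, hDmdef, hDndef]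
  -- rewrite f x y
  have hfix : f x y = ∑ ν ∈ Finset.range (m+1), ∑' k : ℕ, bw m x ν * pw t k * f x y := by
    have h1 : ∀ ν : ℕ, ∑' k : ℕ, bw m x ν * pw t k * f x y = bw m x ν * f x y := by
      intro ν
      have h2 : (fun k : ℕ => bw m x ν * pw t k * f x y)
          = fun k : ℕ => (bw m x ν * f x y) * pw t k := by funext k; ring
      rw [h2, tsum_mul_left, tsum_pw, mul_one]
    rw [Finset.sum_congr rfl fun ν _ => h1 ν, ← Finset.sum_mul, bw_sum, one_mul]
  -- difference
  have hdiff : L α₁ β₁ α₂ β₂ m n f x y - f x y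
      = ∑ ν ∈ Finset.range (m+1), ∑' k : ℕ, bw m x ν * pw t k * (F ν k - f x y) := by
    rw [hL]
    conv_lhs => rw [hfix]
    rw [← Finset.sum_sub_distrib]
    refine Finset.sum_congr rfl fun ν hν => ?_
    rw [← Summable.tsum_sub (hsF ν hν) (hsconst ν)]
    exact tsum_congr fun k => by ring
  -- the bound function
  set Bnd : ℕ → ℕ → ℝ := fun ν k => bw m x ν * pw t k *
    (ε/2 + c * (((((ν:ℝ) + α₁) / Dm) - x)^2 + ((((k:ℝ) + α₂) / Dn) - y)^2)) with hBnddef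
  have hBndeq : ∀ ν : ℕ, (fun k : ℕ => Bnd ν k)
      = fun k : ℕ => (bw m x ν * (ε/2 + c * ((((ν:ℝ) + α₁) / Dm - x)^2))) * pw t k
        + (c * bw m x ν) * (pw t k * ((((k:ℝ) + α₂) / Dn) - y)^2) := by
    intro ν; funext k; rw [hBnddef]; ring
  have hSsum : Summable (fun k : ℕ => pw t k * ((((k:ℝ) + α₂) / Dn) - y)^2) := by
    rw [htdef, hDndef]; exact summable_S α₂ β₂ n hn1 hβ₂' y
  have hBndSummable : ∀ ν : ℕ, Summable (Bnd ν) := by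
    intro ν
    rw [show Bnd ν = fun k => Bnd ν k from rfl, hBndeq ν]
    exact ((summable_pw t).mul_left _).add (hSsum.mul_left _)
  have hGle : ∀ ν ∈ Finset.range (m+1), ∀ k : ℕ,
      |bw m x ν * pw t k * (F ν k - f x y)| ≤ Bnd ν k := by
    intro ν hν k
    have hbw := bw_nonneg hx0 hx1 m ν
    have hpw := pw_nonneg ht0 k
    rw [abs_mul, abs_mul, abs_of_nonneg hbw, abs_of_nonneg hpw, hBnddef]
    exact mul_le_mul_of_nonneg_left
      (hpt _ _ x y (hnode1 ν hν) (hnode2 k) hx hy) (by positivity)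
  have hGabsSummable : ∀ ν ∈ Finset.range (m+1),
      Summable (fun k : ℕ => |bw m x ν * pw t k * (F ν k - f x y)|) := by
    intro ν hν
    exact Summable.of_nonneg_of_le (fun k => abs_nonneg _) (hGle ν hν) (hBndSummable ν)
  -- tsum of the bound
  set Sval : ℝ := ∑' k : ℕ, pw t k * ((((k:ℝ) + α₂) / Dn) - y)^2 with hSvaldef
  have htsumBnd : ∀ ν : ℕ, ∑' k : ℕ, Bnd ν k
      = bw m x ν * (ε/2 + c * ((((ν:ℝ) + α₁) / Dm - x)^2)) + c * bw m x ν * Sval := by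
    intro ν
    rw [show (∑' k, Bnd ν k) = ∑' k, ((bw m x ν * (ε/2 + c * ((((ν:ℝ) + α₁) / Dm - x)^2))) * pw t k
        + (c * bw m x ν) * (pw t k * ((((k:ℝ) + α₂) / Dn) - y)^2)) from
      tsum_congr fun k => by rw [hBnddef]; ring,
      Summable.tsum_add ((summable_pw t).mul_left _) (hSsum.mul_left _),
      tsum_mul_left, tsum_mul_left, tsum_pw, mul_one, hSvaldef]
  -- main estimate
  have hmain : |L α₁ β₁ α₂ β₂ m n f x y - f x y|
      ≤ ε/2 + c * ((2 + 2*β₁^2)/m) + c * ((2*A + 2*β₂^2*(1+A)^2)/n) := by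
    rw [hdiff]
    have hTb := T_bound α₁ β₁ hα₁ hβ₁ m hm1 hx0 hx1
    have hSb : Sval ≤ (2*A + 2*β₂^2*(1+A)^2)/n := by
      rw [hSvaldef, htdef, hDndef]; exact S_bound α₂ β₂ A hα₂ hβ₂ hA n hn1 hy0 hyA
    have hSval0 : 0 ≤ Sval := by
      rw [hSvaldef]
      exact tsum_nonneg fun k => mul_nonneg (pw_nonneg ht0 k) (sq_nonneg _)
    calc |∑ ν ∈ Finset.range (m+1), ∑' k : ℕ, bw m x ν * pw t k * (F ν k - f x y)|
        ≤ ∑ ν ∈ Finset.range (m+1), |∑' k : ℕ, bw m x ν * pw t k * (F ν k - f x y)| :=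
          Finset.abs_sum_le_sum_abs _ _
      _ ≤ ∑ ν ∈ Finset.range (m+1), ∑' k : ℕ, |bw m x ν * pw t k * (F ν k - f x y)| := by
          refine Finset.sum_le_sum fun ν hν => ?_
          have hnorm := norm_tsum_le_tsum_norm
            (f := fun k : ℕ => bw m x ν * pw t k * (F ν k - f x y))
            (by simpa only [Real.norm_eq_abs] using hGabsSummable ν hν)
          simpa only [Real.norm_eq_abs] using hnorm
      _ ≤ ∑ ν ∈ Finset.range (m+1), ∑' k : ℕ, Bnd ν k := by
          refine Finset.sum_le_sum fun ν hν => ?_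
          exact Summable.tsum_le_tsum (hGle ν hν) (hGabsSummable ν hν) (hBndSummable ν)
      _ = ∑ ν ∈ Finset.range (m+1),
            (bw m x ν * (ε/2 + c * ((((ν:ℝ) + α₁) / Dm - x)^2)) + c * bw m x ν * Sval) :=
          Finset.sum_congr rfl fun ν _ => htsumBnd ν
      _ = (ε/2) * (∑ ν ∈ Finset.range (m+1), bw m x ν)
            + c * (∑ ν ∈ Finset.range (m+1), bw m x ν * ((((ν:ℝ) + α₁) / Dm - x)^2))
            + (c * Sval) * (∑ ν ∈ Finset.range (m+1), bw m x ν) := by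
          rw [Finset.mul_sum, Finset.mul_sum, Finset.mul_sum, ← Finset.sum_add_distrib,
            ← Finset.sum_add_distrib]
          exact Finset.sum_congr rfl fun ν _ => by ring
      _ = ε/2 + c * (∑ ν ∈ Finset.range (m+1), bw m x ν * ((((ν:ℝ) + α₁) / Dm - x)^2))
            + c * Sval := by rw [bw_sum]; ring
      _ ≤ ε/2 + c * ((2 + 2*β₁^2)/m) + c * ((2*A + 2*β₂^2*(1+A)^2)/n) := by
          have h1 : (∑ ν ∈ Finset.range (m+1), bw m x ν * ((((ν:ℝ) + α₁) / Dm - x)^2))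
              ≤ (2 + 2*β₁^2)/m := by rw [hDmdef]; exact hTb
          have h2 : c * Sval ≤ c * ((2*A + 2*β₂^2*(1+A)^2)/n) :=
            mul_le_mul_of_nonneg_left hSb hc0.le
          have h3 : c * (∑ ν ∈ Finset.range (m+1), bw m x ν * ((((ν:ℝ) + α₁) / Dm - x)^2))
              ≤ c * ((2 + 2*β₁^2)/m) := mul_le_mul_of_nonneg_left h1 hc0.le
          linarith
  -- numerics
  have hNr : 2 * c * (C₁ + C₂) / ε < ((N₀ + 1 : ℕ) : ℝ) := by
    push_cast
    calc 2 * c * (C₁ + C₂) / ε ≤ (N₀ : ℝ) := Nat.le_ceil _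
      _ < (N₀ : ℝ) + 1 := by linarith
  have hNm : ((N₀ + 1 : ℕ) : ℝ) ≤ (m : ℝ) := by exact_mod_cast hm
  have hNn : ((N₀ + 1 : ℕ) : ℝ) ≤ (n : ℝ) := by exact_mod_cast hn
  have hN0 : (0:ℝ) < ((N₀ + 1 : ℕ) : ℝ) := by positivity
  set Nr : ℝ := ((N₀ + 1 : ℕ) : ℝ) with hNrdef
  have hfin : c * ((2 + 2*β₁^2)/m) + c * ((2*A + 2*β₂^2*(1+A)^2)/n) < ε/2 := by
    have h1 : C₁/(m:ℝ) ≤ C₁/Nr := div_le_div_of_nonneg_left hC₁0.le hN0 hNm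
    have h2 : C₂/(n:ℝ) ≤ C₂/Nr := div_le_div_of_nonneg_left hC₂0.le hN0 hNn
    have h3 : c * (C₁/Nr) + c * (C₂/Nr) < ε/2 := by
      rw [div_lt_iff₀ hε] at hNr
      have hNrne : Nr ≠ 0 := ne_of_gt hN0
      have e1 : c * (C₁/Nr) + c * (C₂/Nr) = (2 * c * (C₁+C₂)) / (2 * Nr) := by
        field_simp
      have e2 : ε/2 = (Nr * ε) / (2 * Nr) := by field_simp
      rw [e1, e2]
      exact div_lt_div_of_pos_right hNr (by positivity) |>.trans_eq rfl
    have h5 : c * (C₁/(m:ℝ)) ≤ c * (C₁/Nr) := mul_le_mul_of_nonneg_left h1 hc0.le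
    have h6 : c * (C₂/(n:ℝ)) ≤ c * (C₂/Nr) := mul_le_mul_of_nonneg_left h2 hc0.le
    rw [hC₁def] at h5
    rw [hC₂def] at h6
    linarith
  linarith [hmain, hfin]
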